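/- Let n ≥ 3 and let R be a Kähler curvature-type tensor on ℂ^n whose traceless bisectional curvature operator is 2-nonnegative. Then for all pairwise distinct indices i, j, k: Re(R(i,i,i,i)) + Re(R(j,j,j,j)) + Re(R(k,k,k,k)) ≥ 0. In particular, at most two of the holomorphic sectional curvatures Re(R(k,k,k,k)), k = 1,…,n, are negative. -/

import Mathlib

open BigOperators

/-- A Kähler curvature-type tensor on `ℂ^n`: `R i j k l` stands for `R_{i j̄ k l̄}` in a
unitary frame, with the symmetries `R_{i j̄ k l̄} = R_{k j̄ i l̄}`, `R_{i j̄ k l̄} = R_{i l̄ k j̄}`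
and the reality condition `conj R_{i j̄ k l̄} = R_{j ī l k̄}`. -/
def IsKahlerCurvTensor {n : ℕ} (R : Fin n → Fin n → Fin n → Fin n → ℂ) : Prop :=
  (∀ i j k l, R i j k l = R k j i l) ∧
  (∀ i j k l, R i j k l = R i l k j) ∧
  (∀ i j k l, starRingEnd ℂ (R i j k l) = R j i l k)

/-- The Ricci tensor `Ric(i,j) = Σ_k R(i,j,k,k)` of a curvature-type tensor. -/
noncomputable def ricci {n : ℕ} (R : Fin n → Fin n → Fin n → Fin n → ℂ) (i j : Fin n) : ℂ :=
  ∑ k, R i j k k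

/-- The scalar curvature `r = Σ_i Re(Ric(i,i))` of a curvature-type tensor. -/
noncomputable def scalarCurv {n : ℕ} (R : Fin n → Fin n → Fin n → Fin n → ℂ) : ℝ :=
  ∑ i, (ricci R i i).re

/-- `η` belongs to `H₀`, the real vector space of trace-free Hermitian `n × n` matrices
(identified with traceless real `(1,1)`-forms). -/
def MemH0 {n : ℕ} (η : Matrix (Fin n) (Fin n) ℂ) : Prop :=
  η.IsHermitian ∧ η.trace = 0

/-- The inner product `⟨η,τ⟩ = Re Tr(ητ)` on Hermitian matrices. -/
noncomputable def h0Inner {n : ℕ} (η τ : Matrix (Fin n) (Fin n) ℂ) : ℝ :=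
  (Matrix.trace (η * τ)).re

/-- The (real-valued) symmetric bilinear form `ℛ(η,τ) = Σ R(i,j,k,l)·η(j,i)·τ(l,k)`
induced by a curvature-type tensor on Hermitian matrices. -/
noncomputable def curvForm {n : ℕ} (R : Fin n → Fin n → Fin n → Fin n → ℂ)
    (η τ : Matrix (Fin n) (Fin n) ℂ) : ℝ :=
  (∑ i, ∑ j, ∑ k, ∑ l, R i j k l * η j i * τ l k).re

/-- The traceless bisectional curvature operator of `R` is nonnegative:
`ℛ(η,η) ≥ 0` for every `η ∈ H₀`. -/
def NonnegTBC {n : ℕ} (R : Fin n → Fin n → Fin n → Fin n → ℂ) : Prop :=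
  ∀ η : Matrix (Fin n) (Fin n) ℂ, MemH0 η → 0 ≤ curvForm R η η

/-- The traceless bisectional curvature operator of `R` is 2-nonnegative:
`ℛ(η,η) + ℛ(τ,τ) ≥ 0` for all orthonormal pairs `η, τ ∈ H₀`. -/
def TwoNonnegTBC {n : ℕ} (R : Fin n → Fin n → Fin n → Fin n → ℂ) : Prop :=
  ∀ η τ : Matrix (Fin n) (Fin n) ℂ, MemH0 η → MemH0 τ →
    h0Inner η η = 1 → h0Inner τ τ = 1 → h0Inner η τ = 0 →
    0 ≤ curvForm R η η + curvForm R τ τ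

noncomputable def myL {n : ℕ} (R : Fin n → Fin n → Fin n → Fin n → ℂ)
    (η τ : Matrix (Fin n) (Fin n) ℂ) : ℂ :=
  ∑ i, ∑ j, ∑ k, ∑ l, R i j k l * η j i * τ l k

lemma myL_add_left {n : ℕ} (R : Fin n → Fin n → Fin n → Fin n → ℂ)
    (η η' τ : Matrix (Fin n) (Fin n) ℂ) :
    myL R (η + η') τ = myL R η τ + myL R η' τ := by
  simp [myL, Matrix.add_apply, mul_add, add_mul, Finset.sum_add_distrib]

lemma myL_add_right {n : ℕ} (R : Fin n → Fin n → Fin n → Fin n → ℂ)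
    (η τ τ' : Matrix (Fin n) (Fin n) ℂ) :
    myL R η (τ + τ') = myL R η τ + myL R η τ' := by
  simp [myL, Matrix.add_apply, mul_add, add_mul, Finset.sum_add_distrib]

lemma myL_std {n : ℕ} (R : Fin n → Fin n → Fin n → Fin n → ℂ)
    (p q r s : Fin n) (x y : ℂ) :
    myL R (Matrix.single p q x) (Matrix.single r s y) = R q p s r * x * y := by
  simp [myL, Matrix.single, Matrix.of_apply, ite_and, mul_ite, ite_mul,
    Finset.sum_ite_eq, Finset.sum_ite_eq']

lemma conjT_std {n : ℕ} (p q : Fin n) (x : ℂ) :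
    Matrix.conjTranspose (Matrix.single p q x) = Matrix.single q p (starRingEnd ℂ x) := by
  ext a b
  simp only [Matrix.conjTranspose_apply, Matrix.single, Matrix.of_apply]
  by_cases h1 : q = a <;> by_cases h2 : p = b <;> simp [h1, h2, and_comm]

lemma isHermitian_pair {n : ℕ} (p q : Fin n) (x : ℂ) :
    (Matrix.single p q x + Matrix.single q p (starRingEnd ℂ x)).IsHermitian := by
  show Matrix.conjTranspose _ = _
  rw [Matrix.conjTranspose_add, conjT_std, conjT_std]
  simp [add_comm]

lemma bisect_nonneg {n : ℕ} (R : Fin n → Fin n → Fin n → Fin n → ℂ)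
    (hR : (∀ i j k l, R i j k l = R k j i l) ∧
      (∀ i j k l, R i j k l = R i l k j) ∧
      (∀ i j k l, starRingEnd ℂ (R i j k l) = R j i l k))
    (h2 : ∀ η τ : Matrix (Fin n) (Fin n) ℂ, MemH0 η → MemH0 τ →
      h0Inner η η = 1 → h0Inner τ τ = 1 → h0Inner η τ = 0 →
      0 ≤ (myL R η η).re + (myL R τ τ).re)
    {i j : Fin n} (hij : i ≠ j) :
    0 ≤ (R j j i i).re + (R i i j j).re := by
  set c : ℝ := (Real.sqrt 2)⁻¹ with hc
  have hc2 : c * c = 1 / 2 := by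
    rw [hc, ← mul_inv]
    rw [← Real.sqrt_mul_self (by norm_num : (0:ℝ) ≤ 2)]
    norm_num
  set cc : ℂ := (c : ℂ) with hcc
  have hcc2 : cc * cc = (1/2 : ℂ) := by
    rw [hcc, ← Complex.ofReal_mul, hc2]; norm_num
  have hI := Complex.I_sq
  have hccr : starRingEnd ℂ cc = cc := by rw [hcc]; exact Complex.conj_ofReal c
  have hccir : starRingEnd ℂ (cc * Complex.I) = -(cc * Complex.I) := by
    rw [map_mul, hccr, Complex.conj_I]; ring
  set η := Matrix.single i j cc + Matrix.single j i cc with hη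
  set τ := Matrix.single i j (cc * Complex.I) +
    Matrix.single j i (-(cc * Complex.I)) with hτ
  have hηH : MemH0 η := by
    constructor
    · rw [hη]; nth_rewrite 2 [← hccr]
      exact isHermitian_pair i j cc
    · rw [hη, Matrix.trace_add, Matrix.trace_single_eq_of_ne _ _ _ hij,
        Matrix.trace_single_eq_of_ne _ _ _ hij.symm, add_zero]
  have hτH : MemH0 τ := by
    constructor
    · rw [hτ, ← hccir]
      exact isHermitian_pair i j (cc * Complex.I)
    · rw [hτ, Matrix.trace_add, Matrix.trace_single_eq_of_ne _ _ _ hij,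
        Matrix.trace_single_eq_of_ne _ _ _ hij.symm, add_zero]
  have hηn : h0Inner η η = 1 := by
    rw [h0Inner, hη]
    rw [Matrix.add_mul, Matrix.mul_add, Matrix.mul_add]
    rw [Matrix.single_mul_single_of_ne _ _ _ _ hij.symm, Matrix.single_mul_single_of_ne _ _ _ _ hij,
      Matrix.single_mul_single_same, Matrix.single_mul_single_same, hcc2]
    simp [Matrix.trace_add, Matrix.trace_single_eq_same]
    norm_num
  have hτn : h0Inner τ τ = 1 := by
    rw [h0Inner, hτ]
    rw [Matrix.add_mul, Matrix.mul_add, Matrix.mul_add]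
    rw [Matrix.single_mul_single_of_ne _ _ _ _ hij.symm, Matrix.single_mul_single_of_ne _ _ _ _ hij,
      Matrix.single_mul_single_same, Matrix.single_mul_single_same]
    have p3 : cc * Complex.I * -(cc * Complex.I) = (1/2 : ℂ) := by
      linear_combination hcc2 - (cc*cc) * hI
    have p4 : -(cc * Complex.I) * (cc * Complex.I) = (1/2 : ℂ) := by
      linear_combination hcc2 - (cc*cc) * hI
    rw [p3, p4]
    simp [Matrix.trace_add, Matrix.trace_single_eq_same]
    norm_num
  have hortho : h0Inner η τ = 0 := by
    rw [h0Inner, hη, hτ]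
    rw [Matrix.add_mul, Matrix.mul_add, Matrix.mul_add]
    rw [Matrix.single_mul_single_of_ne _ _ _ _ hij.symm, Matrix.single_mul_single_of_ne _ _ _ _ hij,
      Matrix.single_mul_single_same, Matrix.single_mul_single_same]
    have p5 : cc * -(cc * Complex.I) = -(cc * cc * Complex.I) := by ring
    have p6 : cc * (cc * Complex.I) = cc * cc * Complex.I := by ring
    rw [p5, p6]
    simp [Matrix.trace_add, Matrix.trace_single_eq_same]
  have key : myL R η η + myL R τ τ = R j i i j + R i j j i := by
    rw [hη, hτ]
    simp only [myL_add_left, myL_add_right, myL_std]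
    linear_combination (cc*cc*(R j i j i - R j i i j - R i j j i + R i j i j)) * hI +
      (2*(R j i i j + R i j j i)) * hcc2
  have h0 := h2 η τ hηH hτH hηn hτn hortho
  rw [← Complex.add_re, key, Complex.add_re] at h0
  have e1 : R i j j i = R j j i i := by rw [hR.1]
  have e2 : R j i i j = R i i j j := by rw [hR.1]
  rw [e1, e2] at h0
  linarith

lemma three_sum_nonneg {n : ℕ} (R : Fin n → Fin n → Fin n → Fin n → ℂ)
    (hR : (∀ i j k l, R i j k l = R k j i l) ∧
      (∀ i j k l, R i j k l = R i l k j) ∧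
      (∀ i j k l, starRingEnd ℂ (R i j k l) = R j i l k))
    (h2 : ∀ η τ : Matrix (Fin n) (Fin n) ℂ, MemH0 η → MemH0 τ →
      h0Inner η η = 1 → h0Inner τ τ = 1 → h0Inner η τ = 0 →
      0 ≤ (myL R η η).re + (myL R τ τ).re)
    {i j k : Fin n} (hij : i ≠ j) (hik : i ≠ k) (hjk : j ≠ k) :
    0 ≤ (R i i i i).re + (R j j j j).re + (R k k k k).re := by
  have Bij := bisect_nonneg R hR h2 hij
  have Bik := bisect_nonneg R hR h2 hik
  have Bjk := bisect_nonneg R hR h2 hjk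
  set s : ℝ := (Real.sqrt 2)⁻¹ with hs
  have hs2 : s * s = 1 / 2 := by
    rw [hs, ← mul_inv, ← Real.sqrt_mul_self (by norm_num : (0:ℝ) ≤ 2)]
    norm_num
  set t : ℝ := (Real.sqrt 6)⁻¹ with ht
  have ht2 : t * t = 1 / 6 := by
    rw [ht, ← mul_inv, ← Real.sqrt_mul_self (by norm_num : (0:ℝ) ≤ 6)]
    norm_num
  set ss : ℂ := (s : ℂ) with hss
  set tt : ℂ := (t : ℂ) with htt
  have hss2 : ss * ss = (1/2 : ℂ) := by rw [hss, ← Complex.ofReal_mul, hs2]; norm_num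
  have htt2 : tt * tt = (1/6 : ℂ) := by rw [htt, ← Complex.ofReal_mul, ht2]; norm_num
  set η := Matrix.single i i ss + Matrix.single j j (-ss) with hη
  set τ := Matrix.single i i tt + (Matrix.single j j tt
    + Matrix.single k k (-(2*tt))) with hτ
  have hηH : MemH0 η := by
    constructor
    · show Matrix.conjTranspose _ = _
      rw [hη, Matrix.conjTranspose_add, conjT_std, conjT_std]
      simp [hss, Complex.conj_ofReal]
    · rw [hη, Matrix.trace_add, Matrix.trace_single_eq_same, Matrix.trace_single_eq_same]
      ring
  have hτH : MemH0 τ := by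
    constructor
    · show Matrix.conjTranspose _ = _
      rw [hτ, Matrix.conjTranspose_add, Matrix.conjTranspose_add, conjT_std, conjT_std, conjT_std]
      simp [htt, Complex.conj_ofReal, map_ofNat]
    · rw [hτ, Matrix.trace_add, Matrix.trace_add, Matrix.trace_single_eq_same,
        Matrix.trace_single_eq_same, Matrix.trace_single_eq_same]
      ring
  have hηn : h0Inner η η = 1 := by
    rw [h0Inner, hη, Matrix.add_mul, Matrix.mul_add, Matrix.mul_add]
    rw [Matrix.single_mul_single_of_ne _ _ _ _ hij, Matrix.single_mul_single_of_ne _ _ _ _ hij.symm,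
      Matrix.single_mul_single_same, Matrix.single_mul_single_same]
    have p1 : -ss * -ss = (1/2 : ℂ) := by linear_combination hss2
    rw [hss2, p1]
    simp [Matrix.trace_add, Matrix.trace_single_eq_same]
    norm_num
  have hτn : h0Inner τ τ = 1 := by
    rw [h0Inner, hτ]
    rw [Matrix.add_mul, Matrix.add_mul, Matrix.mul_add, Matrix.mul_add, Matrix.mul_add,
      Matrix.mul_add, Matrix.mul_add, Matrix.mul_add]
    rw [Matrix.single_mul_single_of_ne _ _ _ _ hij, Matrix.single_mul_single_of_ne _ _ _ _ hij.symm,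
      Matrix.single_mul_single_of_ne _ _ _ _ hik, Matrix.single_mul_single_of_ne _ _ _ _ hik.symm,
      Matrix.single_mul_single_of_ne _ _ _ _ hjk, Matrix.single_mul_single_of_ne _ _ _ _ hjk.symm,
      Matrix.single_mul_single_same, Matrix.single_mul_single_same,
      Matrix.single_mul_single_same]
    have p2 : -(2*tt) * -(2*tt) = (4/6 : ℂ) := by linear_combination (4:ℂ) * htt2
    rw [htt2, p2]
    simp [Matrix.trace_add, Matrix.trace_single_eq_same]
    norm_num
  have hortho : h0Inner η τ = 0 := by
    rw [h0Inner, hη, hτ]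
    rw [Matrix.add_mul, Matrix.mul_add, Matrix.mul_add, Matrix.mul_add, Matrix.mul_add]
    rw [Matrix.single_mul_single_of_ne _ _ _ _ hij, Matrix.single_mul_single_of_ne _ _ _ _ hij.symm,
      Matrix.single_mul_single_of_ne _ _ _ _ hik, Matrix.single_mul_single_of_ne _ _ _ _ hjk,
      Matrix.single_mul_single_same, Matrix.single_mul_single_same]
    have p3 : -ss * tt = -(ss * tt) := by ring
    rw [p3]
    simp [Matrix.trace_add, Matrix.trace_single_eq_same]
  have keyη : myL R η η = ((1/2 : ℝ) : ℂ) *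
      (R i i i i + R j j j j - R i i j j - R j j i i) := by
    rw [hη]
    simp only [myL_add_left, myL_add_right, myL_std]
    push_cast
    linear_combination (R i i i i + R j j j j - R i i j j - R j j i i) * hss2
  have keyτ : myL R τ τ = ((1/6 : ℝ) : ℂ) *
      (R i i i i + R i i j j - 2 * R i i k k + R j j i i + R j j j j - 2 * R j j k k
        - 2 * R k k i i - 2 * R k k j j + 4 * R k k k k) := by
    rw [hτ]
    simp only [myL_add_left, myL_add_right, myL_std]
    push_cast
    linear_combination (R i i i i + R i i j j - 2 * R i i k k + R j j i i + R j j j j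
      - 2 * R j j k k - 2 * R k k i i - 2 * R k k j j + 4 * R k k k k) * htt2
  have h0 := h2 η τ hηH hτH hηn hτn hortho
  rw [keyη, keyτ, Complex.re_ofReal_mul, Complex.re_ofReal_mul] at h0
  simp only [Complex.add_re, Complex.sub_re, Complex.mul_re, Complex.ofReal_re,
    Complex.ofReal_im] at h0
  norm_num at h0
  linarith

/-- From the proof of Theorem 1.2: under 2-nonnegativity of the traceless bisectional
curvature operator, any three distinct holomorphic sectional curvatures have nonnegative
sum; in particular at most two of the holomorphic sectional curvatures are negative. -/
theorem three_holSec_sum_nonneg_of_twoNonnegTBC (n : ℕ) (hn : 3 ≤ n)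
    (R : Fin n → Fin n → Fin n → Fin n → ℂ)
    (hR : IsKahlerCurvTensor R) (h2 : TwoNonnegTBC R) :
    (∀ i j k : Fin n, i ≠ j → i ≠ k → j ≠ k →
      0 ≤ (R i i i i).re + (R j j j j).re + (R k k k k).re) ∧
    Set.ncard {k : Fin n | (R k k k k).re < 0} ≤ 2 := by
  have h2' : ∀ η τ : Matrix (Fin n) (Fin n) ℂ, MemH0 η → MemH0 τ →
      h0Inner η η = 1 → h0Inner τ τ = 1 → h0Inner η τ = 0 →
      0 ≤ (myL R η η).re + (myL R τ τ).re := by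
    intro η τ a b c d e
    exact h2 η τ a b c d e
  have main : ∀ i j k : Fin n, i ≠ j → i ≠ k → j ≠ k →
      0 ≤ (R i i i i).re + (R j j j j).re + (R k k k k).re := by
    intro i j k hij hik hjk
    exact three_sum_nonneg R hR h2' hij hik hjk
  refine ⟨main, ?_⟩
  by_contra hcon
  push_neg at hcon
  have hfin : {k : Fin n | (R k k k k).re < 0}.Finite := Set.toFinite _
  rw [Set.ncard_eq_toFinset_card _ hfin] at hcon
  set F := hfin.toFinset with hF
  have h3 : 3 ≤ F.card := hcon
  obtain ⟨a, ha⟩ := Finset.card_pos.mp (by omega : 0 < F.card)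
  have h2' : 0 < (F.erase a).card := by
    rw [Finset.card_erase_of_mem ha]; omega
  obtain ⟨b, hb⟩ := Finset.card_pos.mp h2'
  have hba : b ≠ a := (Finset.mem_erase.mp hb).1
  have hbF : b ∈ F := (Finset.mem_erase.mp hb).2
  have h1' : 0 < ((F.erase a).erase b).card := by
    rw [Finset.card_erase_of_mem hb, Finset.card_erase_of_mem ha]; omega
  obtain ⟨c, hc⟩ := Finset.card_pos.mp h1'
  have hcb : c ≠ b := (Finset.mem_erase.mp hc).1
  have hca : c ≠ a := (Finset.mem_erase.mp (Finset.mem_erase.mp hc).2).1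
  have hcF : c ∈ F := (Finset.mem_erase.mp (Finset.mem_erase.mp hc).2).2
  have haN : (R a a a a).re < 0 := (hfin.mem_toFinset).mp ha
  have hbN : (R b b b b).re < 0 := (hfin.mem_toFinset).mp hbF
  have hcN : (R c c c c).re < 0 := (hfin.mem_toFinset).mp hcF
  have := main a b c (Ne.symm hba) (Ne.symm hca) (Ne.symm hcb)
  linarith
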